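/- arXiv:2405.19634 — 4 statements merged into one kernel-verified Lean document; each statement's English description precedes it below -/
import Mathlib

section
/- (Eklof's Lemma) Let B be an R-module and let ⟨M_i : i ≤ ζ⟩ be a continuous increasing chain of R-modules with M_0 = 0 and M_ζ = M, such that for every i < ζ, Ext^1_R(M_{i+1}/M_i, B) = 0. Then Ext^1_R(M, B) = 0. -/
universe u v

/-- `Ext¹_R(A, B) = 0`, phrased via the standard characterization: every short exact
sequence `0 → B → E → A → 0` splits. -/
def Ext1Zero (R : Type v) [Ring R] (A B : Type u) [AddCommGroup A] [Module R A]
    [AddCommGroup B] [Module R B] : Prop :=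
  ∀ (E : Type u) [AddCommGroup E] [Module R E],
    ∀ (i : B →ₗ[R] E) (p : E →ₗ[R] A),
      Function.Injective i → Function.Surjective p →
        LinearMap.range i = LinearMap.ker p →
          ∃ s : A →ₗ[R] E, p ∘ₗ s = LinearMap.id

section aux
variable {R : Type v} [Ring R] {A E B : Type u} [AddCommGroup A] [Module R A]
  [AddCommGroup E] [Module R E] [AddCommGroup B] [Module R B]

theorem glue_aux {ι : Type*} (N : ι → Submodule R A)
    (dir : ∀ a b : ι, ∃ c, N a ≤ N c ∧ N b ≤ N c)
    (P : Submodule R A) (hcover : ∀ x ∈ P, ∃ a, x ∈ N a)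
    (f : ∀ a, ↥(N a) →ₗ[R] E)
    (compat : ∀ (a b : ι) (x : A) (hxa : x ∈ N a) (hxb : x ∈ N b),
      f a ⟨x, hxa⟩ = f b ⟨x, hxb⟩) :
    ∃ g : ↥P →ₗ[R] E, ∀ (a : ι) (x : ↥P) (hx : ↑x ∈ N a), g x = f a ⟨↑x, hx⟩ := by
  classical
  have pick : ∀ x : ↥P, ∃ a, (x : A) ∈ N a := fun x => hcover x x.2
  set g0 : ↥P → E := fun x => f (pick x).choose ⟨x, (pick x).choose_spec⟩ with hg0def
  have hg0 : ∀ (a : ι) (x : ↥P) (hx : (x : A) ∈ N a), g0 x = f a ⟨↑x, hx⟩ := by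
    intro a x hx
    exact compat _ a x (pick x).choose_spec hx
  refine ⟨{ toFun := g0, map_add' := ?_, map_smul' := ?_ }, hg0⟩
  · intro x y
    obtain ⟨a, ha⟩ := pick x
    obtain ⟨b, hb⟩ := pick y
    obtain ⟨c, hac, hbc⟩ := dir a b
    obtain ⟨d, hd⟩ := pick (x + y)
    obtain ⟨e, hce, hde⟩ := dir c d
    have hxe : (x : A) ∈ N e := hce (hac ha)
    have hye : (y : A) ∈ N e := hce (hbc hb)
    have hxye : ((x + y : ↥P) : A) ∈ N e := hde hd
    rw [hg0 e _ hxye, hg0 e x hxe, hg0 e y hye]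
    have h1 : (⟨((x + y : ↥P) : A), hxye⟩ : ↥(N e)) = ⟨x, hxe⟩ + ⟨y, hye⟩ := by
      ext; simp
    rw [h1, map_add]
  · intro r x
    show g0 (r • x) = r • g0 x
    obtain ⟨a, ha⟩ := pick x
    have hrx : ((r • x : ↥P) : A) ∈ N a := (N a).smul_mem r ha
    rw [hg0 a _ hrx, hg0 a x ha]
    have h1 : (⟨((r • x : ↥P) : A), hrx⟩ : ↥(N a)) = r • ⟨(x : A), ha⟩ := by
      ext; simp
    rw [h1, map_smul]

theorem extend_step (i : B →ₗ[R] E) (p : E →ₗ[R] A)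
    (hi : Function.Injective i) (hp : Function.Surjective p)
    (hip : LinearMap.range i = LinearMap.ker p)
    (N N' : Submodule R A) (hNN' : N ≤ N')
    (hext : Ext1Zero R (↥N' ⧸ N.comap N'.subtype) B)
    (s : ↥N →ₗ[R] E) (hs : ∀ x : ↥N, p (s x) = x) :
    ∃ s' : ↥N' →ₗ[R] E, (∀ x : ↥N', p (s' x) = x) ∧
      ∀ (x : A) (hx : x ∈ N), s' ⟨x, hNN' hx⟩ = s ⟨x, hx⟩ := by
  classical
  set E₁ : Submodule R E := Submodule.comap p N' with hE₁
  have hsE₁ : ∀ x : ↥N, s x ∈ E₁ := by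
    intro x
    simp only [hE₁, Submodule.mem_comap, hs]
    exact hNN' x.2
  set s₁ : ↥N →ₗ[R] ↥E₁ := LinearMap.codRestrict E₁ s hsE₁ with hs₁
  set K₁ : Submodule R ↥E₁ := LinearMap.range s₁ with hK₁
  have hiker : ∀ b : B, p (i b) = 0 := by
    intro b
    have : i b ∈ LinearMap.ker p := hip ▸ LinearMap.mem_range_self i b
    exact this
  have hiE₁ : ∀ b : B, i b ∈ E₁ := by
    intro b
    simp only [hE₁, Submodule.mem_comap, hiker]
    exact N'.zero_mem
  set i₁ : B →ₗ[R] ↥E₁ := LinearMap.codRestrict E₁ i hiE₁ with hi₁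
  set iQ : B →ₗ[R] (↥E₁ ⧸ K₁) := K₁.mkQ ∘ₗ i₁ with hiQ
  set pE : ↥E₁ →ₗ[R] ↥N' := LinearMap.codRestrict N' (p ∘ₗ E₁.subtype) (fun e => show (p ∘ₗ E₁.subtype) e ∈ N' from e.2) with hpE
  set mk' : ↥N' →ₗ[R] (↥N' ⧸ N.comap N'.subtype) := (N.comap N'.subtype).mkQ with hmk'
  set pD : ↥E₁ →ₗ[R] (↥N' ⧸ N.comap N'.subtype) := mk' ∘ₗ pE with hpD
  have hKD : K₁ ≤ LinearMap.ker pD := by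
    rintro k ⟨x, rfl⟩
    have : pE (s₁ x) = ⟨(x : A), hNN' x.2⟩ := by
      ext
      simp [hpE, hs₁, hs]
    simp only [LinearMap.mem_ker, hpD, LinearMap.comp_apply, this, hmk']
    rw [Submodule.mkQ_apply, Submodule.Quotient.mk_eq_zero]
    exact x.2
  set pQ : (↥E₁ ⧸ K₁) →ₗ[R] (↥N' ⧸ N.comap N'.subtype) := K₁.liftQ pD hKD with hpQ
  -- injectivity of iQ
  have hiQinj : Function.Injective iQ := by
    rw [injective_iff_map_eq_zero]
    intro b hb
    have : i₁ b ∈ K₁ := by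
      simpa [hiQ, Submodule.Quotient.mk_eq_zero] using hb
    obtain ⟨x, hx⟩ := this
    have hval : s x = i b := congrArg Subtype.val hx
    have : (x : A) = 0 := by
      have := hs x
      rw [hval, hiker] at this
      exact this.symm
    have hx0 : x = 0 := Subtype.ext this
    apply hi
    rw [← hval, hx0, map_zero, map_zero]
  -- surjectivity of pQ
  have hpQsurj : Function.Surjective pQ := by
    intro d
    obtain ⟨y, rfl⟩ := Submodule.Quotient.mk_surjective _ d
    obtain ⟨e, he⟩ := hp y
    have heE₁ : e ∈ E₁ := by
      simp only [hE₁, Submodule.mem_comap, he]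
      exact y.2
    refine ⟨K₁.mkQ ⟨e, heE₁⟩, ?_⟩
    have h1 : pE ⟨e, heE₁⟩ = y := by ext; simp [hpE, he]
    simp [hpQ, hpD, h1, hmk']
  -- range iQ = ker pQ
  have hrk : LinearMap.range iQ = LinearMap.ker pQ := by
    apply le_antisymm
    · rintro _ ⟨b, rfl⟩
      have h1 : pE (i₁ b) = 0 := by
        ext; simp [hpE, hi₁, hiker]
      simp [hiQ, hpQ, hpD, h1]
    · rintro q hq
      obtain ⟨e, rfl⟩ := Submodule.Quotient.mk_surjective _ q
      have h1 : mk' (pE e) = 0 := by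
        simpa [hpQ, hpD] using hq
      have h2 : (pE e : A) ∈ N := by
        rw [hmk', Submodule.mkQ_apply, Submodule.Quotient.mk_eq_zero] at h1
        exact h1
      have h3 : p ((e : E) - s ⟨p e, h2⟩) = 0 := by
        have := hs ⟨p (e : E), h2⟩
        simp [map_sub, this]
      obtain ⟨b, hb⟩ : (e : E) - s ⟨p e, h2⟩ ∈ LinearMap.range i := by
        rw [hip]; exact h3
      refine ⟨b, ?_⟩
      have hsub : e - i₁ b = s₁ ⟨p (e : E), h2⟩ := by
        ext
        simp only [hs₁, Submodule.coe_sub, LinearMap.codRestrict_apply, hi₁, hb]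
        abel
      have : K₁.mkQ e - K₁.mkQ (i₁ b) = 0 := by
        rw [← map_sub, Submodule.mkQ_apply, Submodule.Quotient.mk_eq_zero, hsub]
        exact ⟨_, rfl⟩
      have h4 : K₁.mkQ (i₁ b) = K₁.mkQ e := by
        rwa [sub_eq_zero, eq_comm] at this
      simpa [hiQ] using h4
  obtain ⟨t, ht⟩ := hext (↥E₁ ⧸ K₁) iQ pQ hiQinj hpQsurj hrk
  have htapp : ∀ d, pQ (t d) = d := fun d => congrArg (fun f => f.toFun d) ht
  set W : Submodule R ↥E₁ := Submodule.comap K₁.mkQ (LinearMap.range t) with hW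
  set pW : ↥W →ₗ[R] ↥N' := pE.domRestrict W with hpW
  -- pW is bijective
  have hpWinj : Function.Injective pW := by
    rw [injective_iff_map_eq_zero]
    rintro ⟨w, hw⟩ h
    have hw' : K₁.mkQ w ∈ LinearMap.range t := hw
    obtain ⟨d, hd⟩ := hw'
    have h0 : pE w = 0 := h
    have hd0 : d = 0 := by
      have := htapp d
      rw [hd] at this
      rw [← this]
      have : pQ (K₁.mkQ w) = mk' (pE w) := by simp [hpQ, hpD]
      rw [this, h0, map_zero]
    have hwK : w ∈ K₁ := by
      rw [← Submodule.Quotient.mk_eq_zero, ← Submodule.mkQ_apply, ← hd, hd0, map_zero]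
    obtain ⟨x, hx⟩ := hwK
    have hx1 : (x : A) = 0 := by
      have h5 : pE (s₁ x) = ⟨(x : A), hNN' x.2⟩ := by ext; simp [hpE, hs₁, hs]
      rw [hx, h0] at h5
      exact (congrArg Subtype.val h5).symm
    have : x = 0 := Subtype.ext hx1
    apply Subtype.ext
    show w = 0
    rw [← hx, this, map_zero]
  have hpWsurj : Function.Surjective pW := by
    intro x
    obtain ⟨e, he⟩ := Submodule.Quotient.mk_surjective K₁ (t (mk' x))
    have h1 : mk' (pE e) = mk' x := by
      have h2 : pQ (K₁.mkQ e) = mk' (pE e) := by simp [hpQ, hpD]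
      rw [Submodule.mkQ_apply, he, htapp] at h2
      exact h2.symm
    have h2' : (pE e - x) ∈ N.comap N'.subtype := by
      rw [← Submodule.Quotient.mk_eq_zero, ← Submodule.mkQ_apply, ← hmk', map_sub, h1, sub_self]
    have h2 : ((pE e - x : ↥N') : A) ∈ N := h2'
    set n : ↥N := ⟨((pE e - x : ↥N') : A), h2⟩ with hn
    have hmem : e - s₁ n ∈ W := by
      show K₁.mkQ (e - s₁ n) ∈ LinearMap.range t
      rw [map_sub]
      have : K₁.mkQ (s₁ n) = 0 := by
        rw [Submodule.mkQ_apply, Submodule.Quotient.mk_eq_zero]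
        exact ⟨_, rfl⟩
      rw [this, sub_zero, Submodule.mkQ_apply, he]
      exact ⟨_, rfl⟩
    refine ⟨⟨e - s₁ n, hmem⟩, ?_⟩
    show pE (e - s₁ n) = x
    have h5 : pE (s₁ n) = pE e - x := by
      ext; simp [hpE, hs₁, hs, hn]
    rw [map_sub, h5]
    abel
  set eW := LinearEquiv.ofBijective pW ⟨hpWinj, hpWsurj⟩ with heW
  refine ⟨E₁.subtype ∘ₗ W.subtype ∘ₗ eW.symm.toLinearMap, ?_, ?_⟩
  · intro x
    have h1 : pW (eW.symm x) = x := eW.apply_symm_apply x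
    have : pE ((eW.symm x : ↥W) : ↥E₁) = x := h1
    have := congrArg Subtype.val this
    simpa [hpE] using this
  · intro x hx
    have hsW : s₁ ⟨x, hx⟩ ∈ W := by
      show K₁.mkQ (s₁ ⟨x, hx⟩) ∈ LinearMap.range t
      have : K₁.mkQ (s₁ ⟨x, hx⟩) = 0 := by
        rw [Submodule.mkQ_apply, Submodule.Quotient.mk_eq_zero]
        exact ⟨_, rfl⟩
      rw [this]
      exact ⟨0, map_zero t⟩
    have h1 : pW ⟨s₁ ⟨x, hx⟩, hsW⟩ = ⟨x, hNN' hx⟩ := by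
      show pE (s₁ ⟨x, hx⟩) = _
      ext; simp [hpE, hs₁, hs]
    have h2 : eW.symm ⟨x, hNN' hx⟩ = ⟨s₁ ⟨x, hx⟩, hsW⟩ := by
      apply eW.injective
      rw [eW.apply_symm_apply]
      exact h1.symm
    show E₁.subtype (W.subtype (eW.symm ⟨x, hNN' hx⟩)) = s ⟨x, hx⟩
    rw [h2]
    rfl
end aux

/-- **Eklof's Lemma.**  If `⟨M i : i ≤ ζ⟩` is a continuous increasing chain of submodules of
`A` with `M 0 = 0` and `M ζ = A`, such that `Ext¹(M (i+1) ⧸ M i, B) = 0` for all `i < ζ`,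
then `Ext¹(A, B) = 0`. -/
theorem eklof_lemma {R : Type v} [Ring R] {A B : Type u} [AddCommGroup A] [Module R A]
    [AddCommGroup B] [Module R B] (ζ : Ordinal) (M : Ordinal → Submodule R A)
    (hmono : Monotone M) (h0 : M 0 = ⊥) (htop : M ζ = ⊤)
    (hcont : ∀ i ≤ ζ, Order.IsSuccLimit i → M i = ⨆ j < i, M j)
    (hsucc : ∀ i < ζ,
      Ext1Zero R (↥(M (i + 1)) ⧸ (M i).comap (M (i + 1)).subtype) B) :
    Ext1Zero R A B := by
  classical
  intro E _ _ i p hi hp hip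
  -- the type of partial splittings
  let T := {q : (j : Ordinal) × (↥(M j) →ₗ[R] E) // q.1 ≤ ζ ∧ ∀ x : ↥(M q.1), p (q.2 x) = ↑x}
  let r : T → T → Prop := fun a b =>
    ∃ h : a.1.1 ≤ b.1.1, ∀ (x : A) (hx : x ∈ M a.1.1), b.1.2 ⟨x, hmono h hx⟩ = a.1.2 ⟨x, hx⟩
  have rrefl : ∀ a : T, r a a := fun a => ⟨le_refl _, fun x hx => rfl⟩
  have rtrans : ∀ {a b c : T}, r a b → r b c → r a c := by
    rintro a b c ⟨hab, eab⟩ ⟨hbc, ebc⟩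
    refine ⟨hab.trans hbc, fun x hx => ?_⟩
    have h1 := ebc x (hmono hab hx)
    have h2 := eab x hx
    rw [← h2, ← h1]
  -- given two elements with r a b and b.1.1 ≤ a.1.1, we get r b a
  have rsymm : ∀ a b : T, r a b → b.1.1 ≤ a.1.1 → r b a := by
    rintro a b ⟨hab, eab⟩ hba
    refine ⟨hba, fun x hx => ?_⟩
    have := eab x (hmono hba hx)
    rw [this]
  have hchains : ∀ c : Set T, IsChain r c → ∃ ub, ∀ a ∈ c, r a ub := by
    intro c hc
    rcases Set.eq_empty_or_nonempty c with rfl | hcne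
    · refine ⟨⟨⟨0, 0⟩, zero_le, ?_⟩, by simp⟩
      intro x
      have hxbot : (x : A) ∈ (⊥ : Submodule R A) := by rw [← h0]; exact x.2
      have hx0 : (x : A) = 0 := by simpa using hxbot
      simp [hx0]
    · set S : Set Ordinal := (fun a : T => a.1.1) '' c with hS
      have hSne : S.Nonempty := hcne.image _
      have hbdd : BddAbove S := by
        refine ⟨ζ, ?_⟩
        rintro _ ⟨a, _, rfl⟩
        exact a.2.1
      set lam := sSup S with hlam
      have hlamζ : lam ≤ ζ := csSup_le hSne (by rintro _ ⟨a, _, rfl⟩; exact a.2.1)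
      by_cases hmem : lam ∈ S
      · -- sup attained: the corresponding element is an upper bound
        obtain ⟨a, hac, ha0⟩ := hmem
        have ha : a.1.1 = lam := ha0
        refine ⟨a, fun b hbc => ?_⟩
        rcases eq_or_ne b a with rfl | hne
        · exact rrefl b
        · rcases hc hbc hac hne with hba | hab
          · exact hba
          · exact rsymm a b hab (by rw [ha]; exact le_csSup hbdd ⟨b, hbc, rfl⟩)
      · -- sup not attained: lam is a limit ordinal
        have hlim : Order.IsSuccLimit lam := by
          rw [Ordinal.isSuccLimit_iff]
          refine ⟨?_, Order.isSuccPrelimit_of_succ_lt ?_⟩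
          · intro h
            obtain ⟨a, hac⟩ := hcne
            have h1 : a.1.1 ≤ lam := le_csSup hbdd ⟨a, hac, rfl⟩
            rw [h] at h1
            have : a.1.1 = 0 := le_antisymm h1 zero_le
            exact hmem ⟨a, hac, by show a.1.1 = lam; rw [this, ← h]⟩
          · intro j hj
            obtain ⟨b, hbS, hjb⟩ := exists_lt_of_lt_csSup hSne hj
            have hblam : b ≤ lam := le_csSup hbdd hbS
            have : b ≠ lam := fun h => hmem (h ▸ hbS)
            exact lt_of_le_of_lt (Order.succ_le_of_lt hjb) (lt_of_le_of_ne hblam this)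
        have hMlam : M lam = ⨆ j < lam, M j := hcont lam hlamζ hlim
        haveI : Nonempty ↥c := ⟨⟨hcne.choose, hcne.choose_spec⟩⟩
        set Nfam : ↥c → Submodule R A := fun a => M (a : T).1.1 with hNfam
        have dir : ∀ a b : ↥c, ∃ d, Nfam a ≤ Nfam d ∧ Nfam b ≤ Nfam d := by
          rintro ⟨a, hac⟩ ⟨b, hbc⟩
          rcases eq_or_ne a b with rfl | hne
          · exact ⟨⟨a, hac⟩, le_refl _, le_refl _⟩
          · rcases hc hac hbc hne with ⟨hab, _⟩ | ⟨hba, _⟩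
            · exact ⟨⟨b, hbc⟩, hmono hab, le_refl _⟩
            · exact ⟨⟨a, hac⟩, le_refl _, hmono hba⟩
        have hcover : ∀ x ∈ M lam, ∃ a : ↥c, x ∈ Nfam a := by
          intro x hx
          have hle : M lam ≤ ⨆ a : ↥c, Nfam a := by
            rw [hMlam]
            refine iSup₂_le fun j hj => ?_
            obtain ⟨b, hbS, hjb⟩ := exists_lt_of_lt_csSup hSne hj
            obtain ⟨a, hac, rfl⟩ := hbS
            exact le_trans (hmono hjb.le) (le_iSup Nfam ⟨a, hac⟩)
          have hdir : Directed (· ≤ ·) Nfam := fun a b => dir a b |>.imp fun d hd => hd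
          exact (Submodule.mem_iSup_of_directed Nfam hdir).mp (hle hx)
        have compat : ∀ (a b : ↥c) (x : A) (hxa : x ∈ Nfam a) (hxb : x ∈ Nfam b),
            (a : T).1.2 ⟨x, hxa⟩ = (b : T).1.2 ⟨x, hxb⟩ := by
          rintro ⟨a, hac⟩ ⟨b, hbc⟩ x hxa hxb
          rcases eq_or_ne a b with rfl | hne
          · rfl
          · rcases hc hac hbc hne with ⟨hab, eab⟩ | ⟨hba, eba⟩
            · exact (eab x hxa).symm
            · exact eba x hxb
        obtain ⟨g, hg⟩ := glue_aux Nfam dir (M lam) hcover (fun a => (a : T).1.2) compat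
        have hgp : ∀ x : ↥(M lam), p (g x) = ↑x := by
          intro x
          obtain ⟨a, hxa⟩ := hcover x x.2
          rw [hg a x hxa]
          exact (a : T).2.2 _
        refine ⟨⟨⟨lam, g⟩, hlamζ, hgp⟩, fun a hac => ?_⟩
        refine ⟨le_csSup hbdd ⟨a, hac, rfl⟩, fun x hx => ?_⟩
        exact hg ⟨a, hac⟩ ⟨x, _⟩ hx
  obtain ⟨m, hm⟩ := exists_maximal_of_chains_bounded hchains (fun {a b c} => rtrans)
  -- the maximal element has index ζ
  have hmζ : m.1.1 = ζ := by
    by_contra hne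
    have hlt : m.1.1 < ζ := lt_of_le_of_ne m.2.1 hne
    have hltsucc : m.1.1 < m.1.1 + 1 := by
      rw [Ordinal.add_one_eq_succ]; exact Order.lt_succ m.1.1
    have hle : M m.1.1 ≤ M (m.1.1 + 1) := hmono hltsucc.le
    obtain ⟨s', hs', hext'⟩ := extend_step i p hi hp hip (M m.1.1) (M (m.1.1 + 1)) hle
      (hsucc m.1.1 hlt) m.1.2 m.2.2
    have hsuccle : m.1.1 + 1 ≤ ζ := by
      rw [Ordinal.add_one_eq_succ]
      exact Order.succ_le_of_lt hlt
    have hra : r m ⟨⟨m.1.1 + 1, s'⟩, hsuccle, hs'⟩ := ⟨hltsucc.le, fun x hx => hext' x hx⟩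
    obtain ⟨hback, _⟩ := hm _ hra
    exact absurd (lt_of_lt_of_le hltsucc hback) (lt_irrefl _)
  -- conclude
  have htopm : M m.1.1 = ⊤ := by rw [hmζ, htop]
  set e : A ≃ₗ[R] ↥(M m.1.1) := (LinearEquiv.ofTop (M m.1.1) htopm).symm with he
  refine ⟨m.1.2 ∘ₗ e.toLinearMap, ?_⟩
  ext x
  have h1 : p (m.1.2 (e x)) = ↑(e x) := m.2.2 (e x)
  have h2 : (↑(e x) : A) = x := by
    have := (LinearEquiv.ofTop (M m.1.1) htopm).apply_symm_apply x
    simp only [he]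
    exact this
  simp only [LinearMap.comp_apply, LinearEquiv.coe_toLinearMap, LinearMap.id_apply]
  rw [h1, h2]
end

section
/- Let B be a pure-injective R-module, A an R-module with Ext^1_R(A, B) = 0, and N a pure submodule of A. Then Ext^1_R(A/N, B) = 0. -/
universe u v

/-- A submodule `K` of `F` is *pure* if every finite system of `R`-linear equations with
constants in `K` that is solvable in `F` is solvable in `K`. -/
def IsPureSubmodule {R : Type v} [Ring R] {F : Type u} [AddCommGroup F] [Module R F]
    (K : Submodule R F) : Prop :=
  ∀ (m n : ℕ) (M : Matrix (Fin m) (Fin n) R) (b : Fin m → F),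
    (∀ i, b i ∈ K) →
    (∃ x : Fin n → F, ∀ i, ∑ j, M i j • x j = b i) →
    (∃ x : Fin n → K, ∀ i, ∑ j, M i j • (x j : F) = b i)

/-- `B` is *pure-injective*: every homomorphism from a pure submodule `K` of a module `L`
into `B` extends to `L`. -/
def PureInjective (R : Type v) [Ring R] (B : Type u) [AddCommGroup B] [Module R B] : Prop :=
  ∀ (L : Type u) [AddCommGroup L] [Module R L],
    ∀ (K : Submodule R L), IsPureSubmodule K →
      ∀ f : K →ₗ[R] B, ∃ g : L →ₗ[R] B, ∀ x : K, g x = f x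

/-- If `B` is pure-injective, `Ext¹(A, B) = 0`, and `N` is a pure submodule of `A`,
then `Ext¹(A ⧸ N, B) = 0`. -/
theorem ext1_zero_quotient_of_pure {R : Type v} [Ring R] {A B : Type u}
    [AddCommGroup A] [Module R A] [AddCommGroup B] [Module R B]
    (hB : PureInjective R B) (hA : Ext1Zero R A B)
    (N : Submodule R A) (hN : IsPureSubmodule N) :
    Ext1Zero R (A ⧸ N) B := by
  intro E _ _ i p hi hp hrk
  -- pullback E' = {(a,e) | mkQ a = p e}
  set q : (A × E) →ₗ[R] (A ⧸ N) := N.mkQ ∘ₗ LinearMap.fst R A E - p ∘ₗ LinearMap.snd R A E with hq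
  set E' : Submodule R (A × E) := LinearMap.ker q with hE'
  have memE' : ∀ x : A × E, x ∈ E' ↔ N.mkQ x.1 = p x.2 := by
    intro x
    simp [hE', hq, LinearMap.mem_ker, sub_eq_zero]
  -- maps B → E' → A
  have h0 : ∀ b : B, ((0 : A), i b) ∈ E' := by
    intro b
    rw [memE']
    have : i b ∈ LinearMap.ker p := hrk ▸ LinearMap.mem_range_self i b
    simpa using this.symm
  let i' : B →ₗ[R] E' := LinearMap.codRestrict E'
    (LinearMap.prod 0 i) (fun b => h0 b)
  let p' : E' →ₗ[R] A := (LinearMap.fst R A E) ∘ₗ E'.subtype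
  have hi' : Function.Injective i' := by
    intro b b' hbb
    apply hi
    have := congrArg (fun x : E' => (x : A × E).2) hbb
    exact this
  have hp' : Function.Surjective p' := by
    intro a
    obtain ⟨e, he⟩ := hp (N.mkQ a)
    exact ⟨⟨(a, e), (memE' _).2 he.symm⟩, rfl⟩
  have hrk' : LinearMap.range i' = LinearMap.ker p' := by
    ext x
    constructor
    · rintro ⟨b, rfl⟩
      simp [p', i', LinearMap.codRestrict]
    · intro hx
      have hx1 : (x : A × E).1 = 0 := hx
      have hker : p (x : A × E).2 = 0 := by
        have := (memE' (x : A × E)).1 x.2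
        rw [hx1] at this
        simpa using this.symm
      obtain ⟨b, hb⟩ := hrk ▸ (LinearMap.mem_ker.2 hker : (x : A × E).2 ∈ LinearMap.ker p)
      refine ⟨b, ?_⟩
      apply Subtype.ext
      simp [i', LinearMap.codRestrict]
      exact Prod.ext hx1.symm hb
  obtain ⟨s, hs⟩ := hA E' i' p' hi' hp' hrk'
  -- t : A → E, with p (t a) = mkQ a
  let t : A →ₗ[R] E := (LinearMap.snd R A E) ∘ₗ E'.subtype ∘ₗ s
  have ht : ∀ a : A, p (t a) = N.mkQ a := by
    intro a
    have h1 : ((s a : A × E)).1 = a := by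
      have := congrArg (fun f : A →ₗ[R] A => f a) hs
      simpa [p'] using this
    have h2 := (memE' ((s a : A × E))).1 (s a).2
    rw [h1] at h2
    exact h2.symm
  -- t maps N into range i
  have htN : ∀ n : N, t n ∈ LinearMap.range i := by
    intro n
    rw [hrk, LinearMap.mem_ker, ht]
    simpa using (Submodule.Quotient.mk_eq_zero N).2 n.2
  let eB : B ≃ₗ[R] LinearMap.range i := LinearEquiv.ofInjective i hi
  let f : N →ₗ[R] B := (eB.symm : LinearMap.range i →ₗ[R] B) ∘ₗ
    LinearMap.codRestrict (LinearMap.range i) (t ∘ₗ N.subtype) htN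
  have hf : ∀ n : N, i (f n) = t n := by
    intro n
    have : (eB (f n) : E) = t n := by
      simp [f, eB]
      rfl
    exact this
  obtain ⟨g, hg⟩ := hB A N hN f
  -- corrected map kills N
  let t' : A →ₗ[R] E := t - i ∘ₗ g
  have ht'N : N ≤ LinearMap.ker t' := by
    intro n hn
    rw [LinearMap.mem_ker]
    show t n - i (g n) = 0
    rw [show g n = f ⟨n, hn⟩ from hg ⟨n, hn⟩, show t n = t ((⟨n, hn⟩ : N) : A) from rfl,
      hf ⟨n, hn⟩, sub_self]
  refine ⟨N.liftQ t' ht'N, ?_⟩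
  apply LinearMap.ext
  intro x
  obtain ⟨a, rfl⟩ := N.mkQ_surjective x
  have : p (t' a) = N.mkQ a := by
    have hgi : i (g a) ∈ LinearMap.ker p := hrk ▸ LinearMap.mem_range_self i (g a)
    have : t' a = t a - i (g a) := rfl
    rw [this, map_sub, ht, LinearMap.mem_ker.1 hgi, sub_zero]
  simpa using this
end

section
/- If ⟨P_i : i ≤ ζ⟩ is a continuous increasing chain of R-modules with P_0 = 0 such that each successive quotient P_{i+1}/P_i is projective, then every inclusion P_i → P_{i+1} splits, and P_ζ is isomorphic to the direct sum ⊕_{i<ζ} P_{i+1}/P_i; in particular P_ζ is projective. -/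
universe u v

/-- If the quotient by a submodule is projective, the submodule has a complement. -/
theorem exists_isCompl_of_projective_quotient' {R : Type v} [Ring R] {M : Type u}
    [AddCommGroup M] [Module R M] (p : Submodule R M) [Module.Projective R (M ⧸ p)] :
    ∃ q : Submodule R M, IsCompl p q := by
  obtain ⟨s, hs⟩ := p.mkQ.exists_rightInverse_of_surjective (by rw [Submodule.range_mkQ])
  refine ⟨LinearMap.range s, ?_, ?_⟩
  · rw [disjoint_iff, eq_bot_iff]
    rintro x ⟨hxp, y, rfl⟩
    have hyy : p.mkQ (s y) = y := by
      rw [← LinearMap.comp_apply, hs, LinearMap.id_apply]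
    have hy : y = 0 := by
      rw [← hyy, Submodule.mkQ_apply, Submodule.Quotient.mk_eq_zero]
      exact hxp
    simp [hy]
  · rw [codisjoint_iff, eq_top_iff]
    intro x _
    rw [Submodule.mem_sup]
    refine ⟨x - s (p.mkQ x), ?_, s (p.mkQ x), ⟨_, rfl⟩, by abel⟩
    rw [← Submodule.Quotient.mk_eq_zero p, ← Submodule.mkQ_apply, map_sub]
    have : p.mkQ (s (p.mkQ x)) = p.mkQ x := by
      rw [← LinearMap.comp_apply, hs, LinearMap.id_apply]
    rw [this, sub_self]

/-- A family of submodules indexed by a linear order such that each member is disjoint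
from the supremum of the previous ones is supremum-independent. -/
theorem iSupIndep_of_disjoint_biSup_lt {R : Type v} {A : Type u} {ι : Type*} [Ring R]
    [AddCommGroup A] [Module R A] [LinearOrder ι] (Z : ι → Submodule R A)
    (h : ∀ i, Disjoint (Z i) (⨆ j < i, Z j)) : iSupIndep Z := by
  classical
  apply iSupIndep_of_dfinsupp_lsum_injective
  rw [injective_iff_map_eq_zero]
  intro l hl
  by_contra hne
  have hsupp : l.support.Nonempty := by
    rwa [Finset.nonempty_iff_ne_empty, Ne, DFinsupp.support_eq_empty]
  set i := l.support.max' hsupp with hidef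
  have hmem : i ∈ l.support := l.support.max'_mem hsupp
  have hsum : ((l i : A)) + ∑ j ∈ l.support.erase i, (l j : A) = 0 := by
    rw [Finset.add_sum_erase _ (fun j => ((l j : A))) hmem]
    rw [DFinsupp.lsum_apply_apply, DFinsupp.sumAddHom_apply] at hl
    exact hl
  have hrest : (l i : A) ∈ ⨆ j < i, Z j := by
    have : (l i : A) = -∑ j ∈ l.support.erase i, (l j : A) := by
      rw [eq_neg_iff_add_eq_zero]; exact hsum
    rw [this]
    refine neg_mem (Submodule.sum_mem _ fun j hj => ?_)
    have hji : j < i := by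
      rcases Finset.mem_erase.mp hj with ⟨hne', hjs⟩
      exact lt_of_le_of_ne (Finset.le_max' _ _ hjs) hne'
    exact le_iSup₂ (f := fun j (_ : j < i) => Z j) j hji (l j).2
  have hzero : (l i : A) = 0 := Submodule.disjoint_def.mp (h i) _ (l i).2 hrest
  exact DFinsupp.mem_support_iff.mp hmem (Subtype.ext hzero)

/-- If `⟨P i : i ≤ ζ⟩` is a continuous increasing chain of submodules of `A` with `P 0 = 0`,
`P ζ = A`, and each successive quotient `P (i+1) ⧸ P i` projective, then every inclusion
`P i → P (i+1)` splits, and `A` is isomorphic to the direct sum of the successive quotients;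
in particular `A` is projective. -/
theorem filtration_projective_quotients {R : Type v} [Ring R] {A : Type u}
    [AddCommGroup A] [Module R A] (ζ : Ordinal) (P : Ordinal → Submodule R A)
    (hmono : Monotone P) (h0 : P 0 = ⊥) (htop : P ζ = ⊤)
    (hcont : ∀ i ≤ ζ, Order.IsSuccLimit i → P i = ⨆ j < i, P j)
    (hproj : ∀ i < ζ,
      Module.Projective R (↥(P (i + 1)) ⧸ (P i).comap (P (i + 1)).subtype)) :
    (∀ i < ζ, ∃ Y : Submodule R (P (i + 1)),
        IsCompl ((P i).comap (P (i + 1)).subtype) Y) ∧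
      Nonempty (A ≃ₗ[R] DirectSum {i : Ordinal // i < ζ}
        (fun i => ↥(P (i.1 + 1)) ⧸ (P i.1).comap (P (i.1 + 1)).subtype)) ∧
      Module.Projective R A := by
  classical
  have hsplit : ∀ i < ζ, ∃ Y : Submodule R (P (i + 1)),
      IsCompl ((P i).comap (P (i + 1)).subtype) Y := fun i hi => by
    haveI := hproj i hi
    exact exists_isCompl_of_projective_quotient' _
  choose Y hY using hsplit
  set Z : {i : Ordinal // i < ζ} → Submodule R A :=
    fun j => (Y j.1 j.2).map (P (j.1 + 1)).subtype with hZdef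
  have ZleP : ∀ j, Z j ≤ P (j.1 + 1) := fun j => Submodule.map_subtype_le _ _
  -- successor relation
  have key : ∀ (i : Ordinal) (hi : i < ζ),
      P i ⊔ Z ⟨i, hi⟩ = P (i + 1) ∧ Disjoint (P i) (Z ⟨i, hi⟩) := by
    intro i hi
    have hPle : P i ≤ P (i + 1) := hmono (by rw [Ordinal.add_one_eq_succ]; exact Order.le_succ i)
    constructor
    · have := congrArg (Submodule.map (P (i + 1)).subtype) (hY i hi).sup_eq_top
      rwa [Submodule.map_sup, Submodule.map_comap_subtype, inf_eq_right.mpr hPle,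
        Submodule.map_top, Submodule.range_subtype] at this
    · rw [Submodule.disjoint_def]
      intro x hxP hxZ
      obtain ⟨y, hy, rfl⟩ := hxZ
      have hyp : y ∈ (P i).comap (P (i + 1)).subtype := hxP
      have h0' : y = 0 := Submodule.disjoint_def.mp (hY i hi).disjoint y hyp hy
      simp [h0']
  set S : Ordinal → Submodule R A :=
    fun i => ⨆ (j : {j : Ordinal // j < ζ}) (_ : j.1 < i), Z j with hSdef
  have hPS : ∀ i, i ≤ ζ → P i = S i := by
    intro i
    induction i using Ordinal.limitRecOn with
    | zero =>
      intro _
      rw [h0]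
      symm
      simp [hSdef, not_lt_zero]
    | add_one o IH =>
      rw [Ordinal.add_one_eq_succ]
      intro ho
      have hoζ : o < ζ := Order.succ_le_iff.mp ho
      have hIH : P o = S o := IH (le_of_lt hoζ)
      have h1 : P o ⊔ Z ⟨o, hoζ⟩ = P (o + 1) := (key o hoζ).1
      have h2 : S (Order.succ o) = S o ⊔ Z ⟨o, hoζ⟩ := by
        apply le_antisymm
        · refine iSup₂_le fun j hj => ?_
          rcases lt_or_eq_of_le (Order.lt_succ_iff.mp hj) with h | h
          · exact le_sup_of_le_left (le_iSup₂ (f := fun j (_ : j.1 < o) => Z j) j h)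
          · exact le_sup_of_le_right (le_of_eq (congrArg Z (Subtype.ext h)))
        · refine sup_le (iSup₂_le fun j hj =>
            le_iSup₂ (f := fun j (_ : j.1 < Order.succ o) => Z j) j
              (hj.trans (Order.lt_succ o)))
            (le_iSup₂ (f := fun j (_ : j.1 < Order.succ o) => Z j) ⟨o, hoζ⟩
              (Order.lt_succ o))
      rw [h2, ← hIH, h1, Ordinal.add_one_eq_succ]
    | limit o ho IH =>
      intro hoζ
      rw [hcont o hoζ ho]
      apply le_antisymm
      · refine iSup₂_le fun j hj => ?_
        rw [IH j hj (le_of_lt (lt_of_lt_of_le hj hoζ))]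
        exact iSup₂_le fun k hk =>
          le_iSup₂ (f := fun k (_ : k.1 < o) => Z k) k (hk.trans hj)
      · refine iSup₂_le fun k hk => ?_
        have h2 : k.1 + 1 < o := by
          rw [Ordinal.add_one_eq_succ]; exact ho.succ_lt hk
        exact le_trans (ZleP k) (le_iSup₂ (f := fun j (_ : j < o) => P j) (k.1 + 1) h2)
  -- the supremum of the Z's is everything
  have hT : (⨆ j, Z j) = ⊤ := by
    have hζ : P ζ = S ζ := hPS ζ le_rfl
    apply le_antisymm le_top
    rw [← htop, hζ]
    exact iSup₂_le fun j _ => le_iSup Z j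
  -- independence
  have hdisj : ∀ j : {i : Ordinal // i < ζ}, Disjoint (Z j) (⨆ k < j, Z k) := by
    intro j
    have h1 : (⨆ k < j, Z k) ≤ P j.1 := by
      rw [hPS j.1 (le_of_lt j.2)]
      exact iSup₂_le fun k hk =>
        le_iSup₂ (f := fun k (_ : k.1 < j.1) => Z k) k (Subtype.coe_lt_coe.mpr hk)
    exact ((key j.1 j.2).2.symm).mono_right h1
  have hindep : iSupIndep Z := iSupIndep_of_disjoint_biSup_lt Z hdisj
  have hint : DirectSum.IsInternal Z :=
    (DirectSum.isInternal_submodule_iff_iSupIndep_and_iSup_eq_top Z).mpr ⟨hindep, hT⟩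
  -- the isomorphisms
  have eJ : ∀ j : {i : Ordinal // i < ζ},
      (↥(P (j.1 + 1)) ⧸ (P j.1).comap (P (j.1 + 1)).subtype) ≃ₗ[R] Z j :=
    fun j => (Submodule.quotientEquivOfIsCompl _ _ (hY j.1 j.2)).trans
      (Submodule.equivMapOfInjective (P (j.1 + 1)).subtype
        (Submodule.injective_subtype _) (Y j.1 j.2))
  have e1 : (DirectSum {i : Ordinal // i < ζ} (fun j => ↥(Z j))) ≃ₗ[R] A :=
    LinearEquiv.ofBijective (DirectSum.coeLinearMap Z) hint
  have e2 : (DirectSum {i : Ordinal // i < ζ}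
        (fun j => ↥(P (j.1 + 1)) ⧸ (P j.1).comap (P (j.1 + 1)).subtype))
      ≃ₗ[R] (DirectSum {i : Ordinal // i < ζ} (fun j => ↥(Z j))) :=
    DFinsupp.mapRange.linearEquiv eJ
  haveI : ∀ j : {i : Ordinal // i < ζ},
      Module.Projective R (↥(P (j.1 + 1)) ⧸ (P j.1).comap (P (j.1 + 1)).subtype) :=
    fun j => hproj j.1 j.2
  haveI : Module.Projective R (DirectSum {i : Ordinal // i < ζ}
      (fun j => ↥(P (j.1 + 1)) ⧸ (P j.1).comap (P (j.1 + 1)).subtype)) :=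
    inferInstanceAs (Module.Projective R
      (Π₀ j : {i : Ordinal // i < ζ}, ↥(P (j.1 + 1)) ⧸ (P j.1).comap (P (j.1 + 1)).subtype))
  exact ⟨fun i hi => ⟨Y i hi, hY i hi⟩, ⟨(e2.trans e1).symm⟩,
    Module.Projective.of_equiv (e2.trans e1)⟩
end

section
/- The class of flat R-modules is closed under transfinite extensions: if ⟨M_i : i ≤ ζ⟩ is a continuous increasing chain of R-modules with M_0 = 0 and each M_{i+1}/M_i flat, then M_ζ is flat. -/
universe u v

open LinearMap TensorProduct

section Aux

variable {R : Type v} [CommRing R] {A : Type u} [AddCommGroup A] [Module R A]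

/-- Flatness is closed under extensions. -/
lemma flat_of_submodule_quotient (N : Submodule R A) [Module.Flat R N]
    [Module.Flat R (A ⧸ N)] : Module.Flat R A := by
  rw [Module.Flat.iff_rTensor_injective']
  intro I
  rw [← LinearMap.ker_eq_bot, eq_bot_iff]
  intro x hx
  simp only [LinearMap.mem_ker] at hx
  have hexact : Function.Exact (lTensor (↥I) N.subtype) (lTensor (↥I) N.mkQ) :=
    lTensor_exact _ (LinearMap.exact_subtype_mkQ N) (Submodule.mkQ_surjective N)
  have hγ : Function.Injective (rTensor (A ⧸ N) I.subtype) :=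
    Module.Flat.rTensor_preserves_injective_linearMap _ I.injective_subtype
  have h1 : (lTensor (↥I) N.mkQ) x = 0 := by
    apply hγ
    have := congrArg (fun z => lTensor R N.mkQ z) hx
    simpa [← LinearMap.comp_apply, LinearMap.lTensor_comp_rTensor,
      LinearMap.rTensor_comp_lTensor] using this
  obtain ⟨y, rfl⟩ := (hexact x).mp h1
  have h2 : lTensor R N.subtype (rTensor (↥N) I.subtype y) = 0 := by
    rw [← LinearMap.comp_apply, LinearMap.lTensor_comp_rTensor,
      ← LinearMap.rTensor_comp_lTensor, LinearMap.comp_apply, hx]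
  have hinj : Function.Injective (lTensor R N.subtype) :=
    Module.Flat.lTensor_preserves_injective_linearMap _ N.injective_subtype
  have h3 : rTensor (↥N) I.subtype y = 0 := hinj (by simpa using h2)
  have : y = 0 := (Module.Flat.iff_rTensor_injective' (R := R) (M := ↥N)).mp ‹_› I h3
  simp [this]

/-- Flatness is closed under directed unions. -/
lemma flat_of_directed_iSup {ι : Type*} [Nonempty ι] (p : ι → Submodule R A)
    (hdir : Directed (· ≤ ·) p) (hflat : ∀ i, Module.Flat R (p i))
    (htop : ⨆ i, p i = ⊤) : Module.Flat R A := by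
  rw [Module.Flat.iff_rTensor_injective']
  intro I
  rw [← LinearMap.ker_eq_bot, eq_bot_iff]
  intro x hx
  simp only [LinearMap.mem_ker] at hx
  have hlift : ∀ z : ↥I ⊗[R] A, ∃ i, ∃ y : ↥I ⊗[R] ↥(p i),
      lTensor (↥I) (p i).subtype y = z := by
    intro z
    induction z using TensorProduct.induction_on with
    | zero => exact ⟨Classical.arbitrary ι, 0, by simp⟩
    | tmul a m =>
        have hm : m ∈ ⨆ i, p i := htop ▸ Submodule.mem_top
        obtain ⟨i, hi⟩ := (Submodule.mem_iSup_of_directed p hdir).mp hm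
        exact ⟨i, a ⊗ₜ ⟨m, hi⟩, rfl⟩
    | add x y ihx ihy =>
        obtain ⟨i, yi, rfl⟩ := ihx
        obtain ⟨j, yj, rfl⟩ := ihy
        obtain ⟨k, hik, hjk⟩ := hdir i j
        refine ⟨k, lTensor _ (Submodule.inclusion hik) yi
          + lTensor _ (Submodule.inclusion hjk) yj, ?_⟩
        rw [map_add, ← LinearMap.comp_apply, ← LinearMap.lTensor_comp,
          ← LinearMap.comp_apply (lTensor _ _), ← LinearMap.lTensor_comp,
          Submodule.subtype_comp_inclusion, Submodule.subtype_comp_inclusion]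
  obtain ⟨i, y, rfl⟩ := hlift x
  have h2 : lTensor R (p i).subtype (rTensor (↥(p i)) I.subtype y) = 0 := by
    rw [← LinearMap.comp_apply, LinearMap.lTensor_comp_rTensor,
      ← LinearMap.rTensor_comp_lTensor, LinearMap.comp_apply, hx]
  have hinj : Function.Injective (lTensor R (p i).subtype) :=
    Module.Flat.lTensor_preserves_injective_linearMap _ (p i).injective_subtype
  have h3 : rTensor (↥(p i)) I.subtype y = 0 := hinj (by simpa using h2)
  have : y = 0 := Module.Flat.iff_rTensor_injective'.mp (hflat i) I h3
  simp [this]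

end Aux

/-- The class of flat `R`-modules is closed under transfinite extensions: if
`⟨M i : i ≤ ζ⟩` is a continuous increasing chain of submodules of `A` with `M 0 = 0`,
`M ζ = A`, and each `M (i+1) ⧸ M i` flat, then `A` is flat. -/
theorem flat_of_filtration {R : Type v} [CommRing R] {A : Type u}
    [AddCommGroup A] [Module R A] (ζ : Ordinal) (M : Ordinal → Submodule R A)
    (hmono : Monotone M) (h0 : M 0 = ⊥) (htop : M ζ = ⊤)
    (hcont : ∀ i ≤ ζ, Order.IsSuccLimit i → M i = ⨆ j < i, M j)
    (hflat : ∀ i < ζ,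
      Module.Flat R (↥(M (i + 1)) ⧸ (M i).comap (M (i + 1)).subtype)) :
    Module.Flat R A := by
  suffices H : ∀ i, i ≤ ζ → Module.Flat R (M i) by
    have := H ζ le_rfl
    rw [htop] at this
    exact Module.Flat.of_linearEquiv Submodule.topEquiv.symm
  intro i
  induction i using Ordinal.induction with
  | h i IH =>
    intro hi
    rcases Ordinal.zero_or_succ_or_isSuccLimit i with h | ⟨j, rfl⟩ | hlim
    · subst h
      rw [h0]
      infer_instance
    · rw [← Ordinal.add_one_eq_succ] at hi ⊢
      have hjlt : j < j + 1 := by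
        rw [Ordinal.add_one_eq_succ]; exact Order.lt_succ j
      have hj : j < ζ := lt_of_lt_of_le hjlt hi
      haveI hIHj : Module.Flat R (M j) := IH j hjlt hj.le
      have hle : M j ≤ M (j + 1) := hmono hjlt.le
      haveI : Module.Flat R ((M j).comap (M (j + 1)).subtype) :=
        Module.Flat.of_linearEquiv (Submodule.comapSubtypeEquivOfLe hle)
      haveI := hflat j hj
      exact flat_of_submodule_quotient ((M j).comap (M (j + 1)).subtype)
    · rw [hcont i hi hlim]
      have hS : (⨆ j < i, M j) = ⨆ j : {j : Ordinal // j < i}, M j := by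
        rw [iSup_subtype']
      rw [hS]
      set S := ⨆ j : {j : Ordinal // j < i}, M j with hSdef
      haveI : Nonempty {j : Ordinal // j < i} := ⟨⟨0, hlim.pos⟩⟩
      set q : {j : Ordinal // j < i} → Submodule R ↥S :=
        fun j => (M j).comap S.subtype with hq
      have hleS : ∀ j : {j : Ordinal // j < i}, M j ≤ S :=
        fun j => le_iSup (fun j : {j : Ordinal // j < i} => M j) j
      have hdir : Directed (· ≤ ·) q := by
        intro a b
        rcases le_total a.1 b.1 with h | h
        · exact ⟨b, Submodule.comap_mono (hmono h), le_rfl⟩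
        · exact ⟨a, le_rfl, Submodule.comap_mono (hmono h)⟩
      have hqflat : ∀ j, Module.Flat R (q j) := by
        intro j
        haveI : Module.Flat R (M j) := IH j j.2 (j.2.le.trans hi)
        exact Module.Flat.of_linearEquiv (Submodule.comapSubtypeEquivOfLe (hleS j))
      have hqtop : ⨆ j, q j = ⊤ := by
        apply Submodule.map_injective_of_injective S.injective_subtype
        rw [Submodule.map_iSup, Submodule.map_top, Submodule.range_subtype]
        simp only [hq, Submodule.map_comap_subtype]
        rw [hSdef]
        exact iSup_congr fun j => inf_eq_right.mpr (hleS j)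
      exact flat_of_directed_iSup q hdir hqflat hqtop
end
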